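/- Let Z, A, M, Y be finitely-valued with strictly positive joint pmf p correctly normalized, and define the front-door functional F(a) = Σ_m p(m | a) · Σ_{a'} p(a') · E[Y | a', m] where Y takes real values. Suppose p is generated by a structural model in which Z, A, M, Y have joint pmf p(z,a,m,y) = p(z) p(a | z, u) p(m | a, z) p(y | m, u) marginalized over a hidden finite variable U with pmf p(u) (so that M fully mediates A's effect and U confounds only A and Y). Then Σ_{z,m} p(z) · p(m | a, z) · Σ_{a'} p(a' | z) · E[Y | z, a', m] = Σ_{z,m,u} p(z) p(u) p(m | a, z) · E_p[Y | m, u], the true interventional mean Σ_y y · p(y | do(a)). -/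
import Mathlib


open Finset

/-- In the structural front-door model with anchor `Z` and hidden confounder
`U` (factorization `p(z)·p(u)·p(a|z,u)·p(m|a,z)·p(y|m,u)`), the generalized front-door
functional computed from the observed margin equals the true interventional mean
`∑ y, y · p(y | do(a))`. -/
theorem stmt_4
    {Z U A M Y : Type*} [Fintype Z] [Fintype U] [Fintype A] [Fintype M] [Fintype Y]
    (f : Y → ℝ)
    (pz : Z → ℝ) (pu : U → ℝ) (pa : A → Z → U → ℝ)
    (pm : M → A → Z → ℝ) (py : Y → M → U → ℝ)
    (hpz : ∀ z, 0 < pz z) (hpu : ∀ u, 0 < pu u)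
    (hpa : ∀ a z u, 0 < pa a z u) (hpm : ∀ m a z, 0 < pm m a z)
    (hpy : ∀ y m u, 0 < py y m u)
    (hpzn : ∑ z, pz z = 1) (hpun : ∑ u, pu u = 1)
    (hpan : ∀ z u, ∑ a, pa a z u = 1) (hpmn : ∀ a z, ∑ m, pm m a z = 1)
    (hpyn : ∀ m u, ∑ y, py y m u = 1)
    (p : Z → A → M → Y → ℝ)
    (hp : ∀ z a m y, p z a m y = ∑ u, pz z * pu u * pa a z u * pm m a z * py y m u)
    (pZm : Z → ℝ)
    (hpZm : ∀ z, pZm z = ∑ a, ∑ m, ∑ y, p z a m y)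
    (pAo : A → Z → ℝ)
    (hpAo : ∀ a z, pAo a z = (∑ m, ∑ y, p z a m y) / (∑ a', ∑ m, ∑ y, p z a' m y))
    (pMo : M → A → Z → ℝ)
    (hpMo : ∀ m a z, pMo m a z = (∑ y, p z a m y) / (∑ m', ∑ y, p z a m' y))
    (pYo : Y → Z → A → M → ℝ)
    (hpYo : ∀ y z a m, pYo y z a m = p z a m y / (∑ y', p z a m y')) :
    ∀ a : A,
      ∑ z, ∑ m, pZm z * pMo m a z * (∑ a', pAo a' z * (∑ y, f y * pYo y z a' m)) =
      ∑ z, ∑ m, ∑ u, pz z * pu u * pm m a z * (∑ y, f y * py y m u) := by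
  intro a
  have hU : (Finset.univ : Finset U).Nonempty := by
    rcases (Finset.univ : Finset U).eq_empty_or_nonempty with h | h
    · rw [h] at hpun; simp at hpun
    · exact h
  have hq : ∀ z b, (0:ℝ) < ∑ u, pu u * pa b z u := fun z b =>
    Finset.sum_pos (fun u _ => mul_pos (hpu u) (hpa b z u)) hU
  -- ∑_y p = pz * pm * q
  have hsy : ∀ z b m, ∑ y, p z b m y = pz z * pm m b z * ∑ u, pu u * pa b z u := by
    intro z b m
    simp_rw [hp]
    rw [Finset.sum_comm]
    simp_rw [← Finset.mul_sum, hpyn, mul_one, Finset.mul_sum]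
    exact Finset.sum_congr rfl fun u _ => by ring
  -- ∑_m ∑_y p = pz * q
  have hsmy : ∀ z b, ∑ m, ∑ y, p z b m y = pz z * ∑ u, pu u * pa b z u := by
    intro z b
    simp_rw [hsy]
    have h1 : ∀ m, pz z * pm m b z * ∑ u, pu u * pa b z u =
        (pz z * ∑ u, pu u * pa b z u) * pm m b z := fun m => by ring
    simp_rw [h1, ← Finset.mul_sum, hpmn, mul_one]
  -- ∑_b ∑_m ∑_y p = pz
  have hsamy : ∀ z, ∑ b, ∑ m, ∑ y, p z b m y = pz z := by
    intro z
    simp_rw [hsmy, ← Finset.mul_sum]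
    rw [Finset.sum_comm]
    simp_rw [← Finset.mul_sum, hpan, mul_one, hpun, mul_one]
  have hZm : ∀ z, pZm z = pz z := fun z => by rw [hpZm, hsamy]
  have hAo : ∀ b z, pAo b z = ∑ u, pu u * pa b z u := by
    intro b z
    rw [hpAo, hsmy, hsamy, mul_comm, mul_div_assoc, div_self (ne_of_gt (hpz z)), mul_one]
  have hMo : ∀ m b z, pMo m b z = pm m b z := by
    intro m b z
    rw [hpMo, hsy]
    have : ∑ m', ∑ y, p z b m' y = pz z * ∑ u, pu u * pa b z u := hsmy z b
    rw [this, mul_comm (pz z) (pm m b z), mul_assoc, mul_div_assoc,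
      div_self (ne_of_gt (mul_pos (hpz z) (hq z b))), mul_one]
  -- ∑_y f y * p
  have hfy : ∀ z b m, ∑ y, f y * p z b m y =
      pz z * pm m b z * ∑ u, pu u * pa b z u * (∑ y, f y * py y m u) := by
    intro z b m
    simp_rw [hp, Finset.mul_sum]
    rw [Finset.sum_comm]
    refine Finset.sum_congr rfl fun u _ => Finset.sum_congr rfl fun y _ => by ring
  have hfYo : ∀ z b m, ∑ y, f y * pYo y z b m =
      (∑ u, pu u * pa b z u * (∑ y, f y * py y m u)) / (∑ u, pu u * pa b z u) := by
    intro z b m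
    have e1 : ∑ y, f y * pYo y z b m =
        (∑ y, f y * p z b m y) / (pz z * pm m b z * ∑ u, pu u * pa b z u) := by
      simp_rw [hpYo, hsy, ← mul_div_assoc]
      rw [← Finset.sum_div]
    rw [e1, hfy,
      mul_div_mul_left _ _ (ne_of_gt (mul_pos (hpz z) (hpm m b z)))]
  -- assemble
  refine Finset.sum_congr rfl fun z _ => Finset.sum_congr rfl fun m _ => ?_
  have hinner : ∑ a', pAo a' z * (∑ y, f y * pYo y z a' m) =
      ∑ u, pu u * (∑ y, f y * py y m u) := by
    calc ∑ a', pAo a' z * (∑ y, f y * pYo y z a' m)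
        = ∑ a', ∑ u, pu u * pa a' z u * (∑ y, f y * py y m u) := by
          refine Finset.sum_congr rfl fun a' _ => ?_
          rw [hAo, hfYo, mul_comm, div_mul_cancel₀ _ (ne_of_gt (hq z a'))]
      _ = ∑ u, pu u * (∑ y, f y * py y m u) := by
          rw [Finset.sum_comm]
          refine Finset.sum_congr rfl fun u _ => ?_
          have : ∀ a', pu u * pa a' z u * (∑ y, f y * py y m u) =
              (pu u * (∑ y, f y * py y m u)) * pa a' z u := fun a' => by ring
          simp_rw [this, ← Finset.mul_sum, hpan, mul_one]
  rw [hZm, hMo, hinner, Finset.mul_sum]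
  exact Finset.sum_congr rfl fun u _ => by ring
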